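/- Let F_q be a finite field of characteristic 2 with q > 4, and λ, μ ∈ F_q with μ ≠ 0. The Hamming weight of the word v_{λ,μ} = (Tr_{F_q/F_2}(λx + μx^3))_{x ∈ F_q^*} equals (q−1) − (1/2)(N − 3), where N is the number of F_q-rational points (including the point at infinity) of the projective curve with affine equation Y^2 + Y = λX + μX^3. -/
import Mathlib

open Finset

section Aux
variable (F : Type*) [Field F] [Fintype F] [DecidableEq F] [CharP F 2] [Algebra (ZMod 2) F]

lemma tr_sq (y : F) : Algebra.trace (ZMod 2) F (y ^ 2) = Algebra.trace (ZMod 2) F y := by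
  have hb : Function.Bijective (frobenius F 2) :=
    Finite.injective_iff_bijective.mp (frobenius_inj F 2)
  let e : F ≃ₐ[ZMod 2] F := AlgEquiv.ofBijective
    { toRingHom := frobenius F 2,
      commutes' := fun c => by
        show algebraMap (ZMod 2) F c ^ 2 = algebraMap (ZMod 2) F c
        rw [← map_pow]
        congr 1
        revert c; decide } hb
  have := Algebra.trace_eq_of_algEquiv e y
  simpa [e, AlgEquiv.ofBijective, frobenius_def] using this

noncomputable def trHom : F →+ ZMod 2 := (Algebra.trace (ZMod 2) F).toAddMonoidHom

def asHom : F →+ F := (frobenius F 2).toAddMonoidHom + AddMonoidHom.id F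

lemma asHom_apply (y : F) : asHom F y = y ^ 2 + y := by
  simp [asHom, frobenius_def]

lemma range_le_ker : (asHom F).range ≤ (trHom F).ker := by
  rintro _ ⟨y, rfl⟩
  simp only [AddMonoidHom.mem_ker, asHom_apply, trHom, LinearMap.toAddMonoidHom_coe, map_add,
    tr_sq]
  exact CharTwo.add_self_eq_zero _

lemma ker_asHom : ((asHom F).ker : Set F) = {0, 1} := by
  ext y
  simp only [SetLike.mem_coe, AddMonoidHom.mem_ker, asHom_apply, Set.mem_insert_iff,
    Set.mem_singleton_iff]
  constructor
  · intro h
    have : y * (y + 1) = 0 := by ring_nf; linear_combination h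
    rcases mul_eq_zero.mp this with h | h
    · exact Or.inl h
    · right; linear_combination h - (CharTwo.two_eq_zero : (2:F) = 0)
  · rintro (rfl | rfl) <;> ring_nf <;> simp [CharTwo.add_self_eq_zero, CharTwo.two_eq_zero]

lemma tr_surj : Function.Surjective (trHom F) :=
  Algebra.trace_surjective (ZMod 2) F

lemma range_eq_ker : (asHom F).range = (trHom F).ker := by
  have h1 : Nat.card (asHom F).range * 2 = Fintype.card F := by
    have := AddSubgroup.card_eq_card_quotient_mul_card_addSubgroup (asHom F).ker
    rw [Nat.card_congr (QuotientAddGroup.quotientKerEquivRange (asHom F)).toEquiv] at this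
    have h2 : Nat.card (asHom F).ker = 2 := by
      rw [← SetLike.coe_sort_coe, ker_asHom, Nat.card_coe_set_eq, Set.ncard_pair]
      exact zero_ne_one
    rw [← h2, ← Nat.card_eq_fintype_card, this]
  have h3 : 2 * Nat.card (trHom F).ker = Fintype.card F := by
    have := AddSubgroup.card_eq_card_quotient_mul_card_addSubgroup (trHom F).ker
    rw [Nat.card_congr (QuotientAddGroup.quotientKerEquivRange (trHom F)).toEquiv,
      (AddMonoidHom.range_eq_top).mpr (tr_surj F)] at this
    have : Nat.card F = Nat.card (⊤ : AddSubgroup (ZMod 2)) * Nat.card (trHom F).ker := this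
    rw [← Nat.card_eq_fintype_card, this]
    congr 1
    rw [← SetLike.coe_sort_coe, AddSubgroup.coe_top, Nat.card_coe_set_eq, Set.ncard_univ,
      Nat.card_eq_fintype_card, ZMod.card]
  exact (AddSubgroup.eq_of_le_of_card_ge) (range_le_ker F) (by omega)

lemma key (c : F) : (univ.filter fun y : F => y ^ 2 + y = c).card
    = if Algebra.trace (ZMod 2) F c = 0 then 2 else 0 := by
  split_ifs with h
  · obtain ⟨y₀, hy₀⟩ : ∃ y, asHom F y = c := by
      have : c ∈ (asHom F).range := (range_eq_ker F) ▸ h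
      exact this
    rw [asHom_apply] at hy₀
    have hset : (univ.filter fun y : F => y ^ 2 + y = c) = {y₀, y₀ + 1} := by
      ext y
      simp only [mem_filter, mem_univ, true_and, mem_insert, mem_singleton]
      constructor
      · intro hy
        have hk : (y + y₀) ∈ ((asHom F).ker : Set F) := by
          simp only [SetLike.mem_coe, AddMonoidHom.mem_ker, asHom_apply]
          have : (y + y₀) ^ 2 + (y + y₀) = (y ^ 2 + y) + (y₀ ^ 2 + y₀) := by
            ring_nf
            linear_combination (y * y₀) * (CharTwo.two_eq_zero : (2:F) = 0)
          rw [this, hy, hy₀, CharTwo.add_self_eq_zero]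
        rw [ker_asHom] at hk
        simp only [Set.mem_insert_iff, Set.mem_singleton_iff] at hk
        rcases hk with hk | hk
        · left; linear_combination hk - CharTwo.add_self_eq_zero (R := F) y₀
        · right; linear_combination hk - CharTwo.add_self_eq_zero (R := F) y₀
      · rintro (rfl | rfl)
        · exact hy₀
        · rw [← hy₀]; ring_nf
          linear_combination (y₀ + 1) * (CharTwo.two_eq_zero : (2:F) = 0)
    rw [hset, card_insert_of_notMem, card_singleton]
    simp only [mem_singleton]
    intro hc
    have : (1 : F) = 0 := by linear_combination -hc
    exact one_ne_zero this
  · rw [Finset.card_eq_zero, Finset.filter_eq_empty_iff]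
    intro y _ hy
    exact h (by
      have : c ∈ (trHom F).ker := (range_eq_ker F) ▸ ⟨y, by rw [asHom_apply, hy]⟩
      exact this)

end Aux

/-- for `F_q` of characteristic 2 with `q > 4` and `λ, μ ∈ F_q`, `μ ≠ 0`, the
Hamming weight of the word `v_{λ,μ} = (Tr(λx + μx³))_{x ∈ F_q^*}` equals
`(q−1) − (1/2)(N − 3)`, where `N` is the number of `F_q`-points of the curve
`Y² + Y = λX + μX³` together with its single point at infinity. -/
theorem stmt_17 (F : Type*) [Field F] [Fintype F] [DecidableEq F] [CharP F 2]
    [Algebra (ZMod 2) F] (hq : 4 < Fintype.card F)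
    (lam mu : F) (hmu : mu ≠ 0)
    (N : ℕ)
    (hN : N = Nat.card {p : F × F // p.2 ^ 2 + p.2 = lam * p.1 + mu * p.1 ^ 3} + 1) :
    2 * (hammingNorm (fun x : {x : F // x ≠ 0} =>
        Algebra.trace (ZMod 2) F (lam * (x : F) + mu * (x : F) ^ 3)) : ℤ)
      = 2 * ((Fintype.card F : ℤ) - 1) - ((N : ℤ) - 3) := by
  classical
  set T := fun x : F => Algebra.trace (ZMod 2) F (lam * x + mu * x ^ 3) with hT
  have hT0 : T 0 = 0 := by simp [hT]
  -- affine point count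
  have hNcard : Nat.card {p : F × F // p.2 ^ 2 + p.2 = lam * p.1 + mu * p.1 ^ 3}
      = 2 * (univ.filter fun x : F => T x = 0).card := by
    rw [Nat.card_eq_fintype_card,
      Fintype.card_congr (Equiv.subtypeProdEquivSigmaSubtype
        fun a b : F => b ^ 2 + b = lam * a + mu * a ^ 3),
      Fintype.card_sigma]
    have : ∀ a : F, Fintype.card { b : F // b ^ 2 + b = lam * a + mu * a ^ 3 }
        = if T a = 0 then 2 else 0 := by
      intro a
      rw [Fintype.card_subtype, key]
    rw [Finset.sum_congr rfl fun a _ => this a, Finset.sum_ite, Finset.sum_const,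
      Finset.sum_const]
    simp [mul_comm]
  -- Hamming weight
  have hwt : hammingNorm (fun x : {x : F // x ≠ 0} =>
        Algebra.trace (ZMod 2) F (lam * (x : F) + mu * (x : F) ^ 3))
      = (univ.filter fun x : F => T x ≠ 0).card := by
    rw [hammingNorm, ← Fintype.card_subtype, ← Fintype.card_subtype]
    refine Fintype.card_congr (Equiv.subtypeSubtypeEquivSubtype
      (p := fun x : F => x ≠ 0) (q := fun x : F => T x ≠ 0) ?_)
    intro x hx
    rintro rfl
    exact hx hT0
  have hsplit : (univ.filter fun x : F => T x = 0).card
      + (univ.filter fun x : F => T x ≠ 0).card = Fintype.card F :=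
    Finset.card_filter_add_card_filter_not _
  rw [hwt, hN, hNcard]
  push_cast
  omega
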